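/- For every integer l ≥ 3, the function I(z) tends to -l³ as z → 0⁺ and tends to -l³ as z → 1⁻; in particular z = 0 and z = 1 are not multiple roots of the equation I(z) = 0. -/

import Mathlib

open Real Filter

/-- `H(u,z)` for the `(l,3,3)` MN codes. -/
noncomputable def Hfun (l : ℕ) (u z : ℝ) : ℝ :=
  (u + 3 * z^l / (l:ℝ) - (1-z) * (1 - 4 * z^(l-1)))^3
    + 6 * (1-z) * (1 - z^(l-1)) * (u + 3 * z^l / (l:ℝ) - (1-z) * (1 - 4 * z^(l-1)))
    - (1-z) * (1 - z^(l-1)) ^ (-2 : ℤ)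
    + 8 * (1-z)^2 * (1 - z^(l-1))^5

/-- `I(z) := l³(1-z^{l-1})²/((1-z)z²) · H(0,z)`. -/
noncomputable def Ifun (l : ℕ) (z : ℝ) : ℝ :=
  (l:ℝ)^3 * (1 - z^(l-1))^2 / ((1-z) * z^2) * Hfun l 0 z

/-- The regular part of `H(0,z)` (everything except the `(1-z^{l-1})^{-2}` term). -/
noncomputable def Pfun (l : ℕ) (z : ℝ) : ℝ :=
  (3 * z^l / (l:ℝ) - (1-z) * (1 - 4 * z^(l-1)))^3
    + 6 * (1-z) * (1 - z^(l-1)) * (3 * z^l / (l:ℝ) - (1-z) * (1 - 4 * z^(l-1)))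
    + 8 * (1-z)^2 * (1 - z^(l-1))^5

/-- Explicit polynomial `M` with
`(1-tz²)²·P - (1-z) = z²·M(L,z,t)` after `t = z^{l-3}`. -/
noncomputable def Mfun (L z t : ℝ) : ℝ :=
  (-1:ℝ) + (1:ℝ) * z^1 - (14:ℝ) * z^1 * t^1 + (27:ℝ) * z^1 * t^1 / L^1 + (28:ℝ) * z^2 * t^1 - (36:ℝ) * z^2 * t^1 / L^1 + (5:ℝ) * z^2 * t^2 - (14:ℝ) * z^3 * t^1 + (9:ℝ) * z^3 * t^1 / L^1 + (63:ℝ) * z^3 * t^2 - (144:ℝ) * z^3 * t^2 / L^1 - (141:ℝ) * z^4 * t^2 + (234:ℝ) * z^4 * t^2 / L^1 - (27:ℝ) * z^4 * t^2 / L^2 - (30:ℝ) * z^4 * t^3 + (73:ℝ) * z^5 * t^2 - (90:ℝ) * z^5 * t^2 / L^1 + (27:ℝ) * z^5 * t^2 / L^2 - (112:ℝ) * z^5 * t^3 + (351:ℝ) * z^5 * t^3 / L^1 + (314:ℝ) * z^6 * t^3 - (648:ℝ) * z^6 * t^3 / L^1 + (162:ℝ) * z^6 * t^3 / L^2 + (80:ℝ)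 * z^6 * t^4 - (172:ℝ) * z^7 * t^3 + (297:ℝ) * z^7 * t^3 / L^1 - (162:ℝ) * z^7 * t^3 / L^2 + (27:ℝ) * z^7 * t^3 / L^3 + (16:ℝ) * z^7 * t^4 - (378:ℝ) * z^7 * t^4 / L^1 - (272:ℝ) * z^8 * t^4 + (738:ℝ) * z^8 * t^4 / L^1 - (243:ℝ) * z^8 * t^4 / L^2 - (104:ℝ) * z^8 * t^5 + (176:ℝ) * z^9 * t^4 - (360:ℝ) * z^9 * t^4 / L^1 + (243:ℝ) * z^9 * t^4 / L^2 - (54:ℝ) * z^9 * t^4 / L^3 + (144:ℝ) * z^9 * t^5 + (144:ℝ) * z^9 * t^5 / L^1 + (24:ℝ) * z^10 * t^5 - (288:ℝ) * z^10 * t^5 / L^1 + (108:ℝ) * z^10 * t^5 / L^2 + (56:ℝ) * z^10 * t^6 - (64:ℝ) * z^11 * t^5 + (144:ℝ) * z^11 * t^5 / L^1 - (108:ℝ) * z^11 * t^5 / L^2 + (27:ℝ) * z^11 * t^5 / L^3 - (112:ℝ) * z^11 * t^6 + (56:ℝ) * z^12 * t^6 - (8:ℝ) * z^12 * t^7 +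 (16:ℝ) * z^13 * t^7 - (8:ℝ) * z^14 * t^7

lemma Mfun_zero (L t : ℝ) : Mfun L 0 t = -1 := by
  simp [Mfun]

lemma pow_lt_one_of (z : ℝ) (hz0 : 0 < z) (hz1 : z < 1) (n : ℕ) (hn : n ≠ 0) :
    z ^ n < 1 :=
  pow_lt_one₀ hz0.le hz1 hn

/-- Core identity, form 1. -/
lemma Ifun_eq (l : ℕ) (hl : 3 ≤ l) (z : ℝ) (hz0 : 0 < z) (hz1 : z < 1) :
    Ifun l z = (l:ℝ)^3 * ((1 - z^(l-1))^2 * Pfun l z - (1-z)) / ((1-z) * z^2) := by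
  have hc : (1 : ℝ) - z^(l-1) ≠ 0 := by
    have := pow_lt_one_of z hz0 hz1 (l-1) (by omega)
    nlinarith
  have hw : (1 : ℝ) - z ≠ 0 := by nlinarith
  have hz : z ≠ 0 := ne_of_gt hz0
  have hzp : ((1:ℝ) - z^(l-1)) ^ (-2 : ℤ) = ((1 - z^(l-1))^2)⁻¹ := by
    rw [zpow_neg]; norm_cast
  have hH : Hfun l 0 z = Pfun l z - (1-z) * ((1 - z^(l-1))^2)⁻¹ := by
    unfold Hfun Pfun; rw [hzp]; ring
  unfold Ifun
  rw [hH]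
  field_simp

set_option maxHeartbeats 1000000 in
/-- Core identity, form 2: explicit polynomial form near `z = 0`. -/
lemma Ifun_eq0 (l : ℕ) (hl : 3 ≤ l) (z : ℝ) (hz0 : 0 < z) (hz1 : z < 1) :
    Ifun l z = (l:ℝ)^3 * Mfun (l:ℝ) z (z^(l-3)) / (1-z) := by
  have hw : (1 : ℝ) - z ≠ 0 := by nlinarith
  have hz : z ≠ 0 := ne_of_gt hz0
  rw [Ifun_eq l hl z hz0 hz1]
  obtain ⟨k, rfl⟩ : ∃ k, l = k + 3 := ⟨l - 3, by omega⟩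
  have h1 : k + 3 - 1 = k + 2 := by omega
  have h3 : k + 3 - 3 = k := by omega
  have key : (1 - z^(k+3-1))^2 * Pfun (k+3) z - (1-z)
      = z^2 * Mfun ((k+3:ℕ):ℝ) z (z^(k+3-3)) := by
    unfold Pfun Mfun
    rw [h1, h3]
    rw [pow_add z k 2, pow_add z k 3]
    ring
  rw [key, h3]
  field_simp

/-- Core identity, form 3: explicit form near `z = 1`. -/
lemma Ifun_eq1 (l : ℕ) (hl : 3 ≤ l) (z : ℝ) (hz0 : 0 < z) (hz1 : z < 1) :
    Ifun l z = (l:ℝ)^3 *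
      ((1-z) * (∑ i ∈ Finset.range (l-1), z^i)^2 * Pfun l z - 1) / z^2 := by
  have hw : (1 : ℝ) - z ≠ 0 := by nlinarith
  have hz : z ≠ 0 := ne_of_gt hz0
  have hgeo : (1 : ℝ) - z^(l-1) = (1-z) * ∑ i ∈ Finset.range (l-1), z^i := by
    have := geom_sum_mul z (l-1)
    nlinarith [this]
  rw [Ifun_eq l hl z hz0 hz1, hgeo]
  field_simp

lemma continuous_Pfun (l : ℕ) : Continuous (Pfun l) := by
  unfold Pfun
  have h1 : Continuous fun z : ℝ => 3 * z^l / (l:ℝ) - (1-z) * (1 - 4 * z^(l-1)) := by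
    apply Continuous.sub
    · exact (continuous_const.mul (continuous_pow l)).div_const _
    · fun_prop
  fun_prop

lemma continuous_Mcomp (l : ℕ) : Continuous (fun z : ℝ => Mfun (l:ℝ) z (z^(l-3))) := by
  unfold Mfun
  apply Continuous.sub
  apply Continuous.add
  apply Continuous.sub
  all_goals fun_prop

/-- `I(z) → -l³` as `z → 0⁺` and as `z → 1⁻`. -/
theorem stmt14 (l : ℕ) (hl : 3 ≤ l) :
    Tendsto (Ifun l) (nhdsWithin 0 (Set.Ioi (0:ℝ))) (nhds (-(l:ℝ)^3)) ∧
    Tendsto (Ifun l) (nhdsWithin 1 (Set.Iio (1:ℝ))) (nhds (-(l:ℝ)^3)) := by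
  have hL : (l:ℝ) ≠ 0 := by positivity
  constructor
  · -- limit at 0⁺
    set F : ℝ → ℝ := fun z => (l:ℝ)^3 * Mfun (l:ℝ) z (z^(l-3)) / (1-z) with hF
    have hcont : ContinuousAt F 0 := by
      apply ContinuousAt.div
      · exact (continuous_const.mul (continuous_Mcomp l)).continuousAt
      · fun_prop
      · norm_num
    have hF0 : F 0 = -(l:ℝ)^3 := by
      simp [hF, Mfun_zero]
    have h1 : Tendsto F (nhdsWithin 0 (Set.Ioi (0:ℝ))) (nhds (-(l:ℝ)^3)) := by
      rw [← hF0]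
      exact (hcont.tendsto).mono_left nhdsWithin_le_nhds
    apply h1.congr'
    have hmem : Set.Iio (1:ℝ) ∈ nhds (0:ℝ) := Iio_mem_nhds (by norm_num)
    filter_upwards [nhdsWithin_le_nhds hmem, self_mem_nhdsWithin] with z hz1 hz0
    exact (Ifun_eq0 l hl z hz0 hz1).symm
  · -- limit at 1⁻
    set F : ℝ → ℝ := fun z => (l:ℝ)^3 *
      ((1-z) * (∑ i ∈ Finset.range (l-1), z^i)^2 * Pfun l z - 1) / z^2 with hF
    have hcont : ContinuousAt F 1 := by
      apply ContinuousAt.div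
      · exact (continuous_const.mul (((((continuous_const.sub continuous_id).mul
          ((continuous_finset_sum _ (fun i _ => continuous_pow i)).pow 2)).mul
          (continuous_Pfun l)).sub continuous_const))).continuousAt
      · fun_prop
      · norm_num
    have hF1 : F 1 = -(l:ℝ)^3 := by
      simp [hF]
    have h1 : Tendsto F (nhdsWithin 1 (Set.Iio (1:ℝ))) (nhds (-(l:ℝ)^3)) := by
      rw [← hF1]
      exact (hcont.tendsto).mono_left nhdsWithin_le_nhds
    apply h1.congr'
    have hmem : Set.Ioi (0:ℝ) ∈ nhds (1:ℝ) := Ioi_mem_nhds (by norm_num)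
    filter_upwards [nhdsWithin_le_nhds hmem, self_mem_nhdsWithin] with z hz0 hz1
    exact (Ifun_eq1 l hl z hz0 hz1).symm
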